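/- For every d ∈ (0,2), ∫_ℝ (1 − e^{−x²/2}) · C_d/|x|^{d+1} dx = 1, where C_d = d·2^{d/2−1}/Γ(1−d/2). -/

import Mathlib

open MeasureTheory Real

open Set Filter

lemma aux_integrable_one_sub_exp_rpow (d : ℝ) (hd1 : 0 < d) (hd2 : d < 2) :
    IntegrableOn (fun x : ℝ => (1 - Real.exp (-x ^ 2 / 2)) * x ^ (-d - 1)) (Ioi 0) := by
  have h1 : IntegrableOn (fun x : ℝ => (1 - Real.exp (-x ^ 2 / 2)) * x ^ (-d - 1)) (Ioc (0:ℝ) 1) := by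
    apply Integrable.mono' (g := fun x : ℝ => x ^ (1 - d) / 2)
    · have := (intervalIntegral.intervalIntegrable_rpow' (a := 0) (b := 1) (r := 1 - d) (by linarith)).div_const 2
      rw [intervalIntegrable_iff_integrableOn_Ioc_of_le zero_le_one] at this
      exact this
    · apply Measurable.aestronglyMeasurable
      fun_prop
    · filter_upwards [ae_restrict_mem measurableSet_Ioc] with x hx
      have hx0 : 0 < x := hx.1
      have he1 : Real.exp (-x ^ 2 / 2) ≤ 1 := by
        apply Real.exp_le_one_iff.mpr; nlinarith [sq_nonneg x]
      have he2 : 1 - Real.exp (-x ^ 2 / 2) ≤ x ^ 2 / 2 := by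
        have := Real.add_one_le_exp (-x ^ 2 / 2)
        linarith
      rw [norm_mul, norm_of_nonneg (by linarith), norm_of_nonneg (le_of_lt (rpow_pos_of_pos hx0 _))]
      calc (1 - Real.exp (-x ^ 2 / 2)) * x ^ (-d - 1) ≤ (x ^ 2 / 2) * x ^ (-d - 1) := by
            apply mul_le_mul_of_nonneg_right he2 (le_of_lt (rpow_pos_of_pos hx0 _))
        _ = x ^ (1 - d) / 2 := by
            rw [div_mul_eq_mul_div, ← rpow_natCast x 2, ← rpow_add hx0, show ((2:ℕ):ℝ) + (-d - 1) = 1 - d by push_cast; ring]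
  have h2 : IntegrableOn (fun x : ℝ => (1 - Real.exp (-x ^ 2 / 2)) * x ^ (-d - 1)) (Ioi (1:ℝ)) := by
    apply Integrable.mono' (g := fun x : ℝ => x ^ (-d - 1))
    · exact integrableOn_Ioi_rpow_of_lt (by linarith) one_pos
    · apply Measurable.aestronglyMeasurable; fun_prop
    · filter_upwards [ae_restrict_mem measurableSet_Ioi] with x hx
      have hx0 : (0:ℝ) < x := lt_trans one_pos hx
      have he1 : Real.exp (-x ^ 2 / 2) ≤ 1 := by
        apply Real.exp_le_one_iff.mpr; nlinarith [sq_nonneg x]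
      have hp := Real.exp_pos (-x ^ 2 / 2)
      rw [norm_mul, norm_of_nonneg (by linarith), norm_of_nonneg (le_of_lt (rpow_pos_of_pos hx0 _))]
      nlinarith [rpow_pos_of_pos hx0 (-d - 1)]
  have : Ioi (0:ℝ) = Ioc 0 1 ∪ Ioi 1 := (Set.Ioc_union_Ioi_eq_Ioi zero_le_one).symm
  rw [this]
  exact h1.union h2

lemma aux_integral_one_sub_exp_rpow (d : ℝ) (hd1 : 0 < d) (hd2 : d < 2)
    (hg2 : MeasureTheory.IntegrableOn
      (fun x : ℝ => (1 - Real.exp (-x ^ 2 / 2)) * x ^ (-d - 1)) (Set.Ioi 0)) :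
    ∫ x in Ioi (0:ℝ), (1 - Real.exp (-x ^ 2 / 2)) * x ^ (-d - 1)
      = 2 ^ (-d / 2) * Real.Gamma (1 - d / 2) / d := by
  set F : ℝ → ℝ := fun x => (1 - Real.exp (-x ^ 2 / 2)) * (-(x ^ (-d)) / d) with hF
  set G1 : ℝ → ℝ := fun x => x * Real.exp (-x ^ 2 / 2) * (-(x ^ (-d)) / d) with hG1
  set g2 : ℝ → ℝ := fun x => (1 - Real.exp (-x ^ 2 / 2)) * x ^ (-d - 1) with hg2def
  -- integrability of G1
  have hrint : IntegrableOn (fun x : ℝ => x ^ (1 - d) * Real.exp (-(1/2) * x ^ 2)) (Ioi 0) :=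
    integrableOn_rpow_mul_exp_neg_mul_sq (by norm_num) (by linarith)
  have heq1 : EqOn (fun x : ℝ => -(1/d) * (x ^ (1 - d) * Real.exp (-(1/2) * x ^ 2))) G1 (Ioi 0) := by
    intro x hx
    have hx0 : (0:ℝ) < x := hx
    simp only [hG1]
    rw [show (1:ℝ) - d = 1 + (-d) by ring, rpow_add hx0, rpow_one,
      show -(1/2) * x ^ 2 = -x^2/2 by ring]
    ring
  have hG1int : IntegrableOn G1 (Ioi 0) :=
    MeasureTheory.IntegrableOn.congr_fun (hrint.const_mul (-(1/d))) heq1 measurableSet_Ioi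
  -- derivative
  have hderiv : ∀ x ∈ Ioi (0:ℝ), HasDerivAt F (G1 x + g2 x) x := by
    intro x hx
    have hx0 : (0:ℝ) < x := hx
    have h1 : HasDerivAt (fun x : ℝ => -x ^ 2 / 2) (-x) x := by
      have := ((hasDerivAt_pow 2 x).neg).div_const 2
      exact this.congr_deriv (by ring)
    have hexp : HasDerivAt (fun x : ℝ => Real.exp (-x ^ 2 / 2)) (Real.exp (-x ^ 2 / 2) * (-x)) x :=
      (Real.hasDerivAt_exp _).comp x h1
    have hu : HasDerivAt (fun x : ℝ => 1 - Real.exp (-x ^ 2 / 2)) (x * Real.exp (-x ^ 2 / 2)) x := by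
      have := (hasDerivAt_const x (1:ℝ)).sub hexp
      exact this.congr_deriv (by ring)
    have hv : HasDerivAt (fun x : ℝ => -(x ^ (-d)) / d) (x ^ (-d - 1)) x := by
      have := ((Real.hasDerivAt_rpow_const (p := -d) (Or.inl (ne_of_gt hx0))).neg).div_const d
      apply this.congr_deriv
      field_simp
    exact (hu.mul hv).congr_deriv (by simp only [hG1, hg2def]; try ring)
  -- limit at infinity
  have hlim : Tendsto F atTop (nhds 0) := by
    have l1 : Tendsto (fun x : ℝ => 1 - Real.exp (-x ^ 2 / 2)) atTop (nhds 1) := by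
      have h2 : Tendsto (fun x : ℝ => x ^ 2) atTop atTop := tendsto_pow_atTop two_ne_zero
      have harg : Tendsto (fun x : ℝ => -x ^ 2 / 2) atTop atBot :=
        (tendsto_neg_atTop_atBot.comp h2).atBot_div_const (by norm_num)
      have := Real.tendsto_exp_atBot.comp harg
      simpa using (tendsto_const_nhds (x := (1:ℝ))).sub this
    have l2 : Tendsto (fun x : ℝ => -(x ^ (-d)) / d) atTop (nhds 0) := by
      have := (tendsto_rpow_neg_atTop hd1).neg.div_const d
      simpa using this
    simpa using l1.mul l2
  -- continuity at 0 within Ici 0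
  have hF0 : F 0 = 0 := by simp [hF]
  have hcont : ContinuousWithinAt F (Ici 0) 0 := by
    rw [ContinuousWithinAt, hF0]
    apply squeeze_zero_norm' (a := fun x : ℝ => x ^ (2 - d) / (2 * d))
    · filter_upwards [self_mem_nhdsWithin] with x hx
      rcases eq_or_lt_of_le (Set.mem_Ici.mp hx) with h | hx0
      · simp [hF, ← h, Real.zero_rpow (by linarith : (2:ℝ) - d ≠ 0)]
      · have he2 : 1 - Real.exp (-x ^ 2 / 2) ≤ x ^ 2 / 2 := by
          have := Real.add_one_le_exp (-x ^ 2 / 2); linarith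
        have he1 : Real.exp (-x ^ 2 / 2) ≤ 1 := by
          apply Real.exp_le_one_iff.mpr; nlinarith [sq_nonneg x]
        have hrp : (0:ℝ) < x ^ (-d) := rpow_pos_of_pos hx0 _
        simp only [hF]
        rw [norm_mul, norm_of_nonneg (by linarith), norm_div, norm_neg,
          norm_of_nonneg (le_of_lt hrp), norm_of_nonneg (le_of_lt hd1)]
        calc (1 - Real.exp (-x ^ 2 / 2)) * (x ^ (-d) / d) ≤ (x ^ 2 / 2) * (x ^ (-d) / d) := by
              apply mul_le_mul_of_nonneg_right he2 (by positivity)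
          _ = x ^ (2 - d) / (2 * d) := by
              rw [div_mul_div_comm, ← rpow_natCast x 2, ← rpow_add hx0,
                show ((2:ℕ):ℝ) + (-d) = 2 - d by push_cast; ring]
    · have hc : ContinuousAt (fun x : ℝ => x ^ (2 - d)) 0 :=
        Real.continuousAt_rpow_const 0 (2 - d) (Or.inr (by linarith))
      have h0 : (0:ℝ) ^ (2 - d) = 0 := Real.zero_rpow (by linarith)
      have := hc.tendsto.div_const (2 * d)
      rw [h0] at this
      simpa using this.mono_left nhdsWithin_le_nhds
  -- FTC
  have hFTC : ∫ x in Ioi (0:ℝ), (G1 x + g2 x) = 0 - F 0 :=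
    integral_Ioi_of_hasDerivAt_of_tendsto hcont hderiv (hG1int.add hg2) hlim
  rw [hF0, sub_zero, integral_add hG1int hg2] at hFTC
  -- compute ∫ G1
  have hG1val : ∫ x in Ioi (0:ℝ), G1 x
      = -(1/d) * ((1/2 : ℝ) ^ (-((1 - d) + 1) / 2) * (1 / 2) * Real.Gamma (((1 - d) + 1) / 2)) := by
    have key : ∫ x in Ioi (0:ℝ), x ^ (1 - d) * Real.exp (-(1/2) * x ^ (2:ℝ))
        = (1/2 : ℝ) ^ (-((1 - d) + 1) / 2) * (1 / 2) * Real.Gamma (((1 - d) + 1) / 2) :=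
      integral_rpow_mul_exp_neg_mul_rpow (by norm_num) (by linarith) (by norm_num)
    have e1 : ∫ x in Ioi (0:ℝ), G1 x
        = ∫ x in Ioi (0:ℝ), -(1/d) * (x ^ (1 - d) * Real.exp (-(1/2) * x ^ (2:ℝ))) := by
      refine (setIntegral_congr_fun measurableSet_Ioi ?_).symm
      intro x hx
      simp only [Real.rpow_two]
      exact heq1 hx
    rw [e1, integral_const_mul, key]
  -- final arithmetic
  have h2d : ((1:ℝ)/2) ^ (-((1 - d) + 1) / 2) * (1/2) = 2 ^ (-d / 2) := by
    rw [one_div, Real.inv_rpow (by norm_num), ← Real.rpow_neg (by norm_num),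
      show -(-((1 - d) + 1) / 2) = (2 - d)/2 by ring, ← Real.rpow_neg_one 2,
      ← Real.rpow_add (by norm_num)]
    congr 1
    ring
  have hGam : ((1:ℝ) - d + 1) / 2 = 1 - d / 2 := by ring
  have hsum : (∫ x in Ioi (0:ℝ), g2 x) = -(∫ x in Ioi (0:ℝ), G1 x) := by linarith
  rw [hG1val, hGam] at hsum
  rw [hsum, h2d]
  ring

/-- The inverse-power exceedance density `H_d(x) = C_d / |x|^{d+1}` with
`C_d = d 2^{d/2-1} / Γ(1-d/2)` satisfies the unit normalization
`∫ (1 - e^{-x²/2}) H_d(dx) = 1`. -/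
theorem inverse_power_exceedance_normalized (d : ℝ) (hd : d ∈ Set.Ioo (0 : ℝ) 2) :
    ∫ x : ℝ, (1 - Real.exp (-x ^ 2 / 2)) *
      (d * 2 ^ (d / 2 - 1) / Real.Gamma (1 - d / 2) / |x| ^ (d + 1)) = 1 := by
  obtain ⟨hd1, hd2⟩ := hd
  set C : ℝ := d * 2 ^ (d / 2 - 1) / Real.Gamma (1 - d / 2) with hC
  have hΓ : 0 < Real.Gamma (1 - d / 2) := Real.Gamma_pos_of_pos (by linarith)
  have step1 : ∫ x : ℝ, (1 - Real.exp (-x ^ 2 / 2)) * (C / |x| ^ (d + 1))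
      = 2 * ∫ x in Ioi (0:ℝ), (1 - Real.exp (-x ^ 2 / 2)) * (C / x ^ (d + 1)) := by
    rw [← integral_comp_abs (f := fun x : ℝ => (1 - Real.exp (-x ^ 2 / 2)) * (C / x ^ (d + 1)))]
    congr 1
    ext x
    rw [sq_abs]
  have step2 : ∫ x in Ioi (0:ℝ), (1 - Real.exp (-x ^ 2 / 2)) * (C / x ^ (d + 1))
      = C * ∫ x in Ioi (0:ℝ), (1 - Real.exp (-x ^ 2 / 2)) * x ^ (-d - 1) := by
    rw [← integral_const_mul]
    apply setIntegral_congr_fun measurableSet_Ioi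
    intro x hx
    have hx0 : (0:ℝ) < x := hx
    beta_reduce
    rw [show -d - 1 = -(d + 1) by ring, Real.rpow_neg (le_of_lt hx0), div_eq_mul_inv]
    ring
  have hval := aux_integral_one_sub_exp_rpow d hd1 hd2
    (aux_integrable_one_sub_exp_rpow d hd1 hd2)
  rw [step1, step2, hval, hC]
  have hkey : (2:ℝ) ^ (d / 2 - 1) * 2 ^ (-d / 2) = 1 / 2 := by
    rw [← Real.rpow_add (by norm_num), show d / 2 - 1 + -d / 2 = -1 by ring,
      Real.rpow_neg_one]
    norm_num
  have hre : d * 2 ^ (d / 2 - 1) / Real.Gamma (1 - d / 2) *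
      (2 ^ (-d / 2) * Real.Gamma (1 - d / 2) / d)
      = (2 ^ (d / 2 - 1) * 2 ^ (-d / 2)) * (Real.Gamma (1 - d / 2) / Real.Gamma (1 - d / 2))
        * (d / d) := by ring
  rw [hre, div_self (ne_of_gt hΓ), div_self (ne_of_gt hd1), hkey]
  norm_num
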